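/- Let A be a commutative ring, S₁ ⊆ S₂ two multiplicatively closed subsets of A with 1 ∈ S₁, and Q an ideal of A with Q ∩ S₂ = ∅. If Q is a weakly S₁-primary ideal of A, then the extension S₂⁻¹Q of Q in the localization S₂⁻¹A is a weakly (S₂⁻¹S₁)-primary ideal of S₂⁻¹A, where S₂⁻¹S₁ = {s/t : s ∈ S₁, t ∈ S₂} is a multiplicatively closed subset of S₂⁻¹A disjoint from S₂⁻¹Q. -/

import Mathlib

/-- An ideal `J` of a commutative ring `B` (disjoint from `T`) is *weakly `T`-primary*
if there exists `t ∈ T` such that for all `x y : B`, if `x*y ∈ J` and `x*y ≠ 0`,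
then `t*x ∈ J` or `t*y ∈ rad(J)`. -/
def WeaklySPrimary {B : Type*} [CommRing B] (T : Set B) (J : Ideal B) : Prop :=
  ∃ t ∈ T, ∀ x y : B, x * y ∈ J → x * y ≠ 0 → t * x ∈ J ∨ t * y ∈ J.radical

theorem weaklySPrimary_localization {A : Type*} [CommRing A] (S₁ S₂ : Submonoid A)
    (h12 : (S₁ : Set A) ⊆ (S₂ : Set A))
    (Q : Ideal A) (hQS : (Q : Set A) ∩ (S₂ : Set A) = ∅)
    (hQ : WeaklySPrimary (S₁ : Set A) Q) :
    ((Q.map (algebraMap A (Localization S₂)) : Set (Localization S₂)) ∩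
        {z : Localization S₂ | ∃ s ∈ S₁, ∃ t : S₂,
          z = IsLocalization.mk' (Localization S₂) s t} = ∅) ∧
      WeaklySPrimary
        {z : Localization S₂ | ∃ s ∈ S₁, ∃ t : S₂,
          z = IsLocalization.mk' (Localization S₂) s t}
        (Q.map (algebraMap A (Localization S₂))) := by
  obtain ⟨t, htS, ht⟩ := hQ
  have hdisj : ∀ a : A, a ∈ Q → a ∈ S₂ → False := fun a ha hs => by
    have : a ∈ (Q : Set A) ∩ (S₂ : Set A) := ⟨ha, hs⟩
    simp [hQS] at this
  constructor
  · ext z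
    simp only [Set.mem_inter_iff, Set.mem_empty_iff_false, iff_false, not_and,
      SetLike.mem_coe, Set.mem_setOf_eq]
    rintro hz ⟨s, hs, u, rfl⟩
    rw [IsLocalization.mk'_mem_map_algebraMap_iff S₂] at hz
    obtain ⟨w, hw, hws⟩ := hz
    exact hdisj _ hws (S₂.mul_mem hw (h12 hs))
  · refine ⟨IsLocalization.mk' (Localization S₂) t (1 : S₂), ⟨t, htS, 1, rfl⟩, ?_⟩
    intro x y hxy hxy0
    obtain ⟨⟨a, u⟩, rfl⟩ := IsLocalization.mk'_surjective S₂ x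
    obtain ⟨⟨b, v⟩, rfl⟩ := IsLocalization.mk'_surjective S₂ y
    rw [← IsLocalization.mk'_mul] at hxy hxy0
    rw [IsLocalization.mk'_mem_map_algebraMap_iff S₂] at hxy
    obtain ⟨w, hw, hwab⟩ := hxy
    have hwab0 : w * (a * b) ≠ 0 := by
      intro h0
      apply hxy0
      rw [IsLocalization.mk'_eq_zero_iff]
      exact ⟨⟨w, hw⟩, h0⟩
    rcases ht (w * a) b (by rwa [mul_assoc]) (by rwa [mul_assoc]) with h | h
    · left
      rw [← IsLocalization.mk'_mul, IsLocalization.mk'_mem_map_algebraMap_iff S₂]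
      exact ⟨w, hw, by rw [show w * (t * a) = t * (w * a) by ring]; exact h⟩
    · right
      obtain ⟨n, hn⟩ := h
      refine ⟨n, ?_⟩
      rw [← IsLocalization.mk'_mul, ← IsLocalization.mk'_pow,
        IsLocalization.mk'_mem_map_algebraMap_iff S₂]
      exact ⟨1, S₂.one_mem, by simpa using Q.mul_mem_left 1 hn⟩
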